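/- arXiv:1011.0941 — 2 statements merged into one kernel-verified Lean document; each statement's English description precedes it below -/
import Mathlib

section
/- Let n, h, k be integers with k ≥ 1, h ≥ 0, n ≡ h (mod 2), and set s = min(k−1, h). Then the total number of k-down steps, summed over all generalized Dyck paths from (0,0) to (n,h), equals C(n, (n+h+2k−2s)/2) − C(n, (n+h)/2 + k + 1). -/
open Finset

attribute [local instance] Classical.propDecidable

/-- The height of the lattice path `p` (where `true` is a northeast step `(1,1)` and
`false` is a southeast step `(1,-1)`) after its first `i` steps. -/
def pathHeight {n : ℕ} (p : Fin n → Bool) (i : ℕ) : ℤ :=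
  ∑ j ∈ Finset.univ.filter (fun j : Fin n => (j : ℕ) < i), (if p j then (1 : ℤ) else -1)

/-- `p` is a generalized Dyck path from `(0,0)` to `(n,h)`: it ends at height `h`
and never goes below the x-axis. -/
def IsGDPath {n : ℕ} (h : ℤ) (p : Fin n → Bool) : Prop :=
  pathHeight p n = h ∧ ∀ i ≤ n, 0 ≤ pathHeight p i

/-- The set of generalized Dyck paths from `(0,0)` to `(n,h)`. -/
noncomputable def gdPaths (n : ℕ) (h : ℤ) : Finset (Fin n → Bool) :=
  Finset.univ.filter (IsGDPath h)

/-- The number of `k`-down steps of `p`, i.e. southeast steps from height `k` to `k-1`. -/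
noncomputable def downSteps {n : ℕ} (k : ℤ) (p : Fin n → Bool) : ℕ :=
  (Finset.univ.filter (fun i : Fin n => p i = false ∧ pathHeight p (i : ℕ) = k)).card

/-- Binomial coefficient on integers, `0` unless `0 ≤ b ≤ a`. -/
def binom (a b : ℤ) : ℤ :=
  if 0 ≤ b ∧ b ≤ a then (a.toNat.choose b.toNat : ℤ) else 0

lemma pathHeight_zero {n : ℕ} (p : Fin n → Bool) : pathHeight p 0 = 0 := by
  simp [pathHeight]

lemma pathHeight_succ {n : ℕ} (p : Fin n → Bool) (i : ℕ) (hi : i < n) :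
    pathHeight p (i + 1) = pathHeight p i + (if p ⟨i, hi⟩ then (1 : ℤ) else -1) := by
  unfold pathHeight
  have hfe : Finset.univ.filter (fun j : Fin n => (j : ℕ) < i + 1) =
      insert ⟨i, hi⟩ (Finset.univ.filter (fun j : Fin n => (j : ℕ) < i)) := by
    ext j
    simp only [Finset.mem_filter, Finset.mem_univ, true_and, Finset.mem_insert, Fin.ext_iff]
    omega
  rw [hfe, Finset.sum_insert (by simp)]
  ring

lemma pathHeight_snoc {n : ℕ} (q : Fin n → Bool) (b : Bool) (i : ℕ) (hi : i ≤ n) :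
    pathHeight (Fin.snoc q b) i = pathHeight q i := by
  induction i with
  | zero => simp [pathHeight_zero]
  | succ i ih =>
    have hi' : i < n := by omega
    rw [pathHeight_succ _ i (by omega), pathHeight_succ q i hi', ih (by omega)]
    congr 2
    have : (⟨i, by omega⟩ : Fin (n+1)) = Fin.castSucc ⟨i, hi'⟩ := rfl
    rw [this, Fin.snoc_castSucc]

lemma pathHeight_snoc_last {n : ℕ} (q : Fin n → Bool) (b : Bool) :
    pathHeight (Fin.snoc q b) (n + 1) = pathHeight q n + (if b then (1 : ℤ) else -1) := by
  rw [pathHeight_succ _ n (by omega), pathHeight_snoc q b n le_rfl]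
  congr 2
  have : (⟨n, by omega⟩ : Fin (n+1)) = Fin.last n := rfl
  rw [this, Fin.snoc_last]

lemma isGDPath_snoc {n : ℕ} (h : ℤ) (hh : 0 ≤ h) (q : Fin n → Bool) (b : Bool) :
    IsGDPath h (Fin.snoc q b) ↔ IsGDPath (h - if b then 1 else -1) q := by
  constructor
  · rintro ⟨he, hn⟩
    rw [pathHeight_snoc_last] at he
    refine ⟨by omega, fun i hi => ?_⟩
    rw [← pathHeight_snoc q b i hi]; exact hn i (by omega)
  · rintro ⟨he, hn⟩
    constructor
    · rw [pathHeight_snoc_last, he]; ring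
    · intro i hi
      by_cases hle : i ≤ n
      · rw [pathHeight_snoc q b i hle]; exact hn i hle
      · have hieq : i = n + 1 := by omega
        subst hieq
        rw [pathHeight_snoc_last]
        have : pathHeight q n + (if b then (1:ℤ) else -1) = h := by rw [he]; ring
        rw [this]; exact hh

lemma downSteps_snoc {n : ℕ} (k : ℤ) (q : Fin n → Bool) (b : Bool) :
    downSteps k (Fin.snoc q b) =
      downSteps k q + (if b = false ∧ pathHeight q n = k then 1 else 0) := by
  unfold downSteps
  rw [Finset.card_filter, Finset.card_filter, Fin.sum_univ_castSucc]
  congr 1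
  · apply Finset.sum_congr rfl
    intro i _
    have h1 : (Fin.snoc q b : Fin (n+1) → Bool) (Fin.castSucc i) = q i := by simp
    have h2 : pathHeight (Fin.snoc q b) (i : ℕ) = pathHeight q i :=
      pathHeight_snoc q b i (le_of_lt i.isLt)
    simp [h1, h2]
  · have h1 : (Fin.snoc q b : Fin (n+1) → Bool) (Fin.last n) = b := by simp
    have h2 : pathHeight (Fin.snoc q b) n = pathHeight q n :=
      pathHeight_snoc q b n le_rfl
    simp [h1, h2]

lemma binom_eq_choose (n : ℕ) (b : ℤ) (hb : 0 ≤ b) :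
    binom (n : ℤ) b = (n.choose b.toNat : ℤ) := by
  unfold binom
  split
  · norm_num
  · rename_i hcon
    have hgt : (n : ℤ) < b := by omega
    have : n < b.toNat := by omega
    rw [Nat.choose_eq_zero_of_lt this]; norm_num

lemma binom_neg (a b : ℤ) (hb : b < 0) : binom a b = 0 := by
  unfold binom; rw [if_neg]; omega

lemma binom_gt (a b : ℤ) (hb : a < b) : binom a b = 0 := by
  unfold binom; rw [if_neg]; omega

lemma binom_pascal (n : ℕ) (b : ℤ) :
    binom ((n : ℤ) + 1) b = binom (n : ℤ) b + binom (n : ℤ) (b - 1) := by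
  rcases lt_or_ge b 0 with hb | hb
  · rw [binom_neg _ _ hb, binom_neg _ _ hb, binom_neg _ _ (by omega)]; ring
  rcases eq_or_lt_of_le hb with rfl | hb1
  · have h1 : ((n : ℤ) + 1) = ((n + 1 : ℕ) : ℤ) := by push_cast; ring
    rw [h1, binom_eq_choose _ _ le_rfl, binom_eq_choose _ _ le_rfl,
      binom_neg _ _ (by omega)]
    simp
  · have h1 : ((n : ℤ) + 1) = ((n + 1 : ℕ) : ℤ) := by push_cast; ring
    rw [h1, binom_eq_choose _ _ hb, binom_eq_choose _ _ hb,
      binom_eq_choose _ _ (by omega)]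
    obtain ⟨c, hc⟩ : ∃ c : ℕ, b.toNat = c + 1 := ⟨b.toNat - 1, by omega⟩
    have h2 : (b - 1).toNat = c := by omega
    rw [hc, h2, Nat.choose_succ_succ']
    push_cast; ring

lemma binom_symm (n : ℕ) (b : ℤ) : binom (n : ℤ) b = binom (n : ℤ) ((n : ℤ) - b) := by
  rcases le_or_gt 0 b with hb | hb
  · rcases le_or_gt b n with hbn | hbn
    · rw [binom_eq_choose _ _ hb, binom_eq_choose _ _ (by omega)]
      have h2 : ((n : ℤ) - b).toNat = n - b.toNat := by omega
      rw [h2, Nat.choose_symm (by omega)]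
    · rw [binom_gt _ _ (by omega), binom_neg _ _ (by omega)]
  · rw [binom_neg _ _ hb, binom_gt _ _ (by omega)]

noncomputable def NP (n : ℕ) (h : ℤ) : ℤ := ((gdPaths n h).card : ℤ)

noncomputable def FP (k : ℤ) (n : ℕ) (h : ℤ) : ℤ := ∑ p ∈ gdPaths n h, (downSteps k p : ℤ)

lemma gdPaths_neg (n : ℕ) (h : ℤ) (hh : h < 0) : gdPaths n h = ∅ := by
  ext p
  simp only [gdPaths, Finset.mem_filter, Finset.mem_univ, true_and, Finset.notMem_empty,
    iff_false]
  rintro ⟨he, hn⟩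
  have := hn n le_rfl
  omega

lemma mem_gdPaths {n : ℕ} {h : ℤ} {p : Fin n → Bool} :
    p ∈ gdPaths n h ↔ IsGDPath h p := by
  simp [gdPaths]

lemma sum_gdPaths_succ {n : ℕ} (h : ℤ) (hh : 0 ≤ h) (f : (Fin (n+1) → Bool) → ℤ) :
    ∑ p ∈ gdPaths (n+1) h, f p =
      (∑ q ∈ gdPaths n (h-1), f (Fin.snoc q true)) +
      (∑ q ∈ gdPaths n (h+1), f (Fin.snoc q false)) := by
  have key : ∀ (m : ℕ) (h' : ℤ) (g : (Fin m → Bool) → ℤ),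
      ∑ p ∈ gdPaths m h', g p = ∑ p : Fin m → Bool, if IsGDPath h' p then g p else 0 := by
    intros; rw [gdPaths, Finset.sum_filter]
  rw [key, key, key]
  rw [← Equiv.sum_comp (Fin.snocEquiv (fun _ => Bool))
    (fun p => if IsGDPath h p then f p else 0)]
  rw [Fintype.sum_prod_type]
  rw [Fintype.sum_bool]
  have e1 : ∀ q : Fin n → Bool,
      (Fin.snocEquiv (fun _ => Bool)) (true, q) = Fin.snoc q true := by intro q; rfl
  have e2 : ∀ q : Fin n → Bool,
      (Fin.snocEquiv (fun _ => Bool)) (false, q) = Fin.snoc q false := by intro q; rfl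
  congr 1
  · refine Finset.sum_congr rfl fun q _ => ?_
    rw [e1, isGDPath_snoc h hh q true]
    norm_num
  · refine Finset.sum_congr rfl fun q _ => ?_
    rw [e2, isGDPath_snoc h hh q false]
    norm_num

lemma NP_succ (n : ℕ) (h : ℤ) (hh : 0 ≤ h) :
    NP (n+1) h = NP n (h-1) + NP n (h+1) := by
  have key := sum_gdPaths_succ (n := n) h hh (fun _ => (1 : ℤ))
  have c : ∀ (m : ℕ) (h' : ℤ), NP m h' = ∑ _p ∈ gdPaths m h', (1 : ℤ) := by
    intro m h'; rw [NP]; simp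
  rw [c, c, c]; exact key

lemma FP_succ (k : ℤ) (n : ℕ) (h : ℤ) (hh : 0 ≤ h) :
    FP k (n+1) h = FP k n (h-1) + FP k n (h+1) + (if h + 1 = k then NP n (h+1) else 0) := by
  rw [FP, sum_gdPaths_succ h hh]
  have e1 : ∑ q ∈ gdPaths n (h-1), ((downSteps k (Fin.snoc q true) : ℕ) : ℤ) =
      FP k n (h-1) := by
    refine Finset.sum_congr rfl fun q _ => ?_
    rw [downSteps_snoc]
    norm_num
  have e2 : ∑ q ∈ gdPaths n (h+1), ((downSteps k (Fin.snoc q false) : ℕ) : ℤ) =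
      FP k n (h+1) + (if h + 1 = k then NP n (h+1) else 0) := by
    have : ∀ q ∈ gdPaths n (h+1), ((downSteps k (Fin.snoc q false) : ℕ) : ℤ) =
        (downSteps k q : ℤ) + (if h + 1 = k then 1 else 0) := by
      intro q hq
      rw [downSteps_snoc]
      have hend : pathHeight q n = h + 1 := (mem_gdPaths.mp hq).1
      rw [hend]
      push_cast
      by_cases hc : h + 1 = k <;> simp [hc]
    rw [Finset.sum_congr rfl this, Finset.sum_add_distrib, Finset.sum_const]
    rw [FP, NP]
    by_cases hc : h + 1 = k <;> simp [hc, mul_comm]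
  rw [e1, e2, add_assoc]

lemma NP_zero (h : ℤ) : NP 0 h = if h = 0 then 1 else 0 := by
  by_cases hh : h = 0
  · subst hh
    rw [NP, if_pos rfl]
    have : gdPaths 0 0 = Finset.univ := by
      ext p
      simp only [mem_gdPaths, Finset.mem_univ, iff_true]
      constructor
      · simp [pathHeight]
      · intro i hi
        interval_cases i
        simp [pathHeight]
    rw [this]
    simp
  · rw [NP, if_neg hh]
    have : gdPaths 0 h = ∅ := by
      ext p
      simp only [mem_gdPaths, Finset.notMem_empty, iff_false]
      rintro ⟨he, -⟩
      apply hh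
      rw [← he]
      simp [pathHeight]
    rw [this]
    simp

lemma FP_zero (k : ℤ) (h : ℤ) : FP k 0 h = 0 := by
  rw [FP]
  refine Finset.sum_eq_zero fun p _ => ?_
  rw [downSteps]
  simp

lemma NP_neg (n : ℕ) (h : ℤ) (hh : h < 0) : NP n h = 0 := by
  rw [NP, gdPaths_neg n h hh]; simp

lemma FP_neg (k : ℤ) (n : ℕ) (h : ℤ) (hh : h < 0) : FP k n h = 0 := by
  rw [FP, gdPaths_neg n h hh]; simp

lemma NP_eq (n : ℕ) : ∀ (h m : ℕ), n + h = 2 * m →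
    NP n (h : ℤ) = binom (n : ℤ) (m : ℤ) - binom (n : ℤ) ((m : ℤ) + 1) := by
  induction n with
  | zero =>
    intro h m hm
    rw [NP_zero]
    by_cases hh : h = 0
    · subst hh
      have hm0 : m = 0 := by omega
      subst hm0
      norm_num [binom]
    · rw [if_neg (by exact_mod_cast hh)]
      rw [binom_gt _ _ (by push_cast; omega), binom_gt _ _ (by push_cast; omega)]
      ring
  | succ n ih =>
    intro h m hm
    have hcast : ((n + 1 : ℕ) : ℤ) = (n : ℤ) + 1 := by push_cast; ring
    rw [hcast, NP_succ n h (by positivity), binom_pascal, binom_pascal]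
    rcases Nat.eq_zero_or_pos h with rfl | hh
    · have hm1 : 1 ≤ m := by omega
      rw [show ((0:ℕ):ℤ) - 1 = (-1 : ℤ) by norm_num, NP_neg n (-1) (by norm_num)]
      rw [show ((0:ℕ):ℤ) + 1 = ((1:ℕ):ℤ) by norm_num, ih 1 m (by omega)]
      have hsymm : binom (n : ℤ) ((m : ℤ) - 1) = binom (n : ℤ) (m : ℤ) := by
        rw [binom_symm n ((m : ℤ) - 1)]
        congr 1
        omega
      have h1 : (m : ℤ) + 1 - 1 = (m : ℤ) := by ring
      rw [h1, hsymm]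
      ring
    · have hm1 : 1 ≤ m := by omega
      rw [show ((h:ℕ):ℤ) - 1 = (((h - 1 : ℕ)):ℤ) by omega,
        show ((h:ℕ):ℤ) + 1 = (((h + 1 : ℕ)):ℤ) by omega,
        ih (h - 1) (m - 1) (by omega), ih (h + 1) m (by omega)]
      have e1 : ((m - 1 : ℕ) : ℤ) = (m : ℤ) - 1 := by omega
      have e2 : (m : ℤ) - 1 + 1 = (m : ℤ) := by ring
      have e3 : (m : ℤ) + 1 - 1 = (m : ℤ) := by ring
      rw [e1, e2, e3]
      ring

lemma binom_congr (n : ℕ) {b c : ℤ} (h : b = c) : binom (n : ℤ) b = binom (n : ℤ) c := by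
  rw [h]

lemma FP_eq (k : ℕ) (hk : 1 ≤ k) (n : ℕ) : ∀ (h m : ℕ), n + h = 2 * m →
    FP (k : ℤ) n (h : ℤ) =
      (if (k : ℤ) - 1 ≤ (h : ℤ) then binom (n : ℤ) ((m : ℤ) + 1)
        else binom (n : ℤ) ((m : ℤ) + k - h)) - binom (n : ℤ) ((m : ℤ) + k + 1) := by
  induction n with
  | zero =>
    intro h m hm
    rw [FP_zero]
    have hb2 : binom ((0:ℕ) : ℤ) ((m : ℤ) + k + 1) = 0 := binom_gt _ _ (by push_cast; omega)
    split_ifs with hc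
    · rw [binom_gt _ _ (by push_cast; omega), hb2]; ring
    · rw [binom_gt _ _ (by push_cast; omega), hb2]; ring
  | succ n ih =>
    intro h m hm
    have hcast : ((n + 1 : ℕ) : ℤ) = (n : ℤ) + 1 := by push_cast; ring
    rw [hcast, FP_succ (k : ℤ) n (h : ℤ) (by positivity)]
    rcases Nat.eq_zero_or_pos h with rfl | hh
    · -- h = 0
      have hm1 : n + 1 = 2 * m := by omega
      have z1 : FP (k:ℤ) n (((0:ℕ):ℤ) - 1) = 0 := FP_neg _ n _ (by norm_num)
      have ih1 := ih 1 m (by omega)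
      have c2 : (((0:ℕ)):ℤ) + 1 = ((1:ℕ):ℤ) := by norm_num
      rw [z1, c2, ih1]
      by_cases hk1 : k = 1
      · subst hk1
        have np := NP_eq n 1 m (by omega)
        rw [if_pos (show ((1:ℕ):ℤ) - 1 ≤ ((1:ℕ):ℤ) by norm_num),
          if_pos (show ((1:ℕ):ℤ) = ((1:ℕ):ℤ) from rfl), np,
          if_pos (show ((1:ℕ):ℤ) - 1 ≤ ((0:ℕ):ℤ) by norm_num),
          binom_pascal, binom_pascal]
        push_cast
        ring_nf
      · -- k ≥ 2
        have hk2 : 2 ≤ k := by omega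
        rw [if_neg (show ¬(((1:ℕ):ℤ) = (k:ℤ)) by push_cast; omega),
          if_neg (show ¬((k:ℤ) - 1 ≤ ((0:ℕ):ℤ)) by push_cast; omega)]
        have e1 : (if (k:ℤ) - 1 ≤ ((1:ℕ):ℤ) then binom (n : ℤ) ((m : ℤ) + 1)
            else binom (n : ℤ) ((m : ℤ) + k - ((1:ℕ):ℤ))) =
            binom (n : ℤ) ((m : ℤ) + k - 1) := by
          split_ifs with hc
          · exact binom_congr n (by push_cast at hc; omega)
          · exact binom_congr n (by push_cast; ring)
        rw [e1, binom_pascal, binom_pascal]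
        push_cast
        ring_nf
    · -- h ≥ 1
      have hm1 : 1 ≤ m := by omega
      have ih1 := ih (h - 1) (m - 1) (by omega)
      have ih2 := ih (h + 1) m (by omega)
      have c1 : ((h - 1 : ℕ) : ℤ) = (h : ℤ) - 1 := by omega
      have c2 : ((h + 1 : ℕ) : ℤ) = (h : ℤ) + 1 := by push_cast; ring
      have c3 : ((m - 1 : ℕ) : ℤ) = (m : ℤ) - 1 := by omega
      have np := NP_eq n (h + 1) m (by omega)
      rw [c1, c3] at ih1
      rw [c2] at ih2
      rw [c2] at np
      rcases lt_trichotomy h (k - 1) with hreg | hreg | hreg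
      · -- regime C : h + 2 ≤ k
        have hk2 : h + 2 ≤ k := by omega
        have ih1' : FP (k:ℤ) n ((h:ℤ) - 1) =
            binom (n:ℤ) ((m:ℤ) + k - h) - binom (n:ℤ) ((m:ℤ) + k) := by
          rw [ih1, if_neg (show ¬((k:ℤ) - 1 ≤ (h:ℤ) - 1) by omega),
            binom_congr n (show (m:ℤ) - 1 + k - ((h:ℤ) - 1) = (m:ℤ) + k - h by ring),
            binom_congr n (show (m:ℤ) - 1 + k + 1 = (m:ℤ) + k by ring)]
        have ih2' : FP (k:ℤ) n ((h:ℤ) + 1) =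
            binom (n:ℤ) ((m:ℤ) + k - h - 1) - binom (n:ℤ) ((m:ℤ) + k + 1) := by
          rw [ih2]
          congr 1
          split_ifs with hc
          · exact binom_congr n (by omega)
          · exact binom_congr n (by ring)
        rw [ih1', ih2', if_neg (show ¬((h:ℤ) + 1 = (k:ℤ)) by omega),
          if_neg (show ¬((k:ℤ) - 1 ≤ (h:ℤ)) by omega),
          binom_pascal, binom_pascal]
        ring_nf
      · -- regime B : h = k - 1
        have hkeq : (h : ℤ) + 1 = (k : ℤ) := by omega
        have ih1' : FP (k:ℤ) n ((h:ℤ) - 1) =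
            binom (n:ℤ) ((m:ℤ) + 1) - binom (n:ℤ) ((m:ℤ) + k) := by
          rw [ih1, if_neg (show ¬((k:ℤ) - 1 ≤ (h:ℤ) - 1) by omega),
            binom_congr n (show (m:ℤ) - 1 + k - ((h:ℤ) - 1) = (m:ℤ) + 1 by omega),
            binom_congr n (show (m:ℤ) - 1 + k + 1 = (m:ℤ) + k by ring)]
        have ih2' : FP (k:ℤ) n ((h:ℤ) + 1) =
            binom (n:ℤ) ((m:ℤ) + 1) - binom (n:ℤ) ((m:ℤ) + k + 1) := by
          rw [ih2, if_pos (show (k:ℤ) - 1 ≤ (h:ℤ) + 1 by omega)]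
        rw [ih1', ih2', if_pos hkeq, np,
          if_pos (show (k:ℤ) - 1 ≤ (h:ℤ) by omega),
          binom_pascal, binom_pascal]
        ring_nf
      · -- regime A : k ≤ h
        have hk2 : k ≤ h := by omega
        have ih1' : FP (k:ℤ) n ((h:ℤ) - 1) =
            binom (n:ℤ) (m:ℤ) - binom (n:ℤ) ((m:ℤ) + k) := by
          rw [ih1, if_pos (show (k:ℤ) - 1 ≤ (h:ℤ) - 1 by omega),
            binom_congr n (show (m:ℤ) - 1 + 1 = (m:ℤ) by ring),
            binom_congr n (show (m:ℤ) - 1 + k + 1 = (m:ℤ) + k by ring)]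
        have ih2' : FP (k:ℤ) n ((h:ℤ) + 1) =
            binom (n:ℤ) ((m:ℤ) + 1) - binom (n:ℤ) ((m:ℤ) + k + 1) := by
          rw [ih2, if_pos (show (k:ℤ) - 1 ≤ (h:ℤ) + 1 by omega)]
        rw [ih1', ih2', if_neg (show ¬((h:ℤ) + 1 = (k:ℤ)) by omega),
          if_pos (show (k:ℤ) - 1 ≤ (h:ℤ) by omega),
          binom_pascal, binom_pascal]
        ring_nf

/-- The total number of k-down steps over all generalized Dyck paths from (0,0) to (n,h)
equals C(n, (n+h+2k−2s)/2) − C(n, (n+h)/2 + k + 1), where s = min(k−1,h). -/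
theorem stmt1 (n h k : ℕ) (hk : 1 ≤ k) (hmod : n % 2 = h % 2) :
    ((∑ p ∈ gdPaths n (h : ℤ), downSteps (k : ℤ) p : ℕ) : ℤ) =
      binom n (((n : ℤ) + h + 2 * k - 2 * min ((k : ℤ) - 1) (h : ℤ)) / 2) -
        binom n (((n : ℤ) + h) / 2 + k + 1) := by
  obtain ⟨m, hm⟩ : ∃ m : ℕ, n + h = 2 * m := ⟨(n + h) / 2, by omega⟩
  have lhs : ((∑ p ∈ gdPaths n (h : ℤ), downSteps (k : ℤ) p : ℕ) : ℤ) =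
      FP (k : ℤ) n (h : ℤ) := by
    rw [FP]; push_cast; rfl
  rw [lhs, FP_eq k hk n h m hm]
  have d1 : ((n : ℤ) + h) / 2 + k + 1 = (m : ℤ) + k + 1 := by omega
  rcases le_or_gt ((k : ℤ) - 1) (h : ℤ) with hc | hc
  · rw [if_pos hc, d1, min_eq_left hc]
    have d2 : ((n : ℤ) + h + 2 * k - 2 * ((k : ℤ) - 1)) / 2 = (m : ℤ) + 1 := by omega
    rw [d2]
  · rw [if_neg (not_le.mpr hc), d1, min_eq_right hc.le]
    have d2 : ((n : ℤ) + h + 2 * k - 2 * (h : ℤ)) / 2 = (m : ℤ) + k - h := by omega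
    rw [d2]
end

section
/- Define polynomials p_k ∈ ℤ[x] for k ≥ −1 by p_{−1} = 0, p_0 = 1, and p_{k+1} = p_k − x²·p_{k−1} for k ≥ 0 (these are the renormalized Chebyshev polynomials of the second kind, p_k(x) = x^k·U_k(1/(2x))). Let 𝒞 denote the formal power series Σ_{m≥0} Catalan(m)·x^{2m} over ℤ[q], and for k ≥ 1 let C_k(x,q) = Σ_{n≥0} P_{k,n}(q)·x^n, a formal power series in x with coefficients in ℤ[q]. Then for every k ≥ 1 the identity (p_k − q·x²·p_{k−1}·𝒞) · C_k(x,q) = p_{k−1} − q·x²·p_{k−2}·𝒞 holds in the ring of formal power series in x over ℤ[q]. (This is the cleared-denominator form of C_k(x,q) = (U_{k−1}(1/(2x)) − qx·U_{k−2}(1/(2x))·C(x²)) / (x·(U_k(1/(2x)) − qx·U_{k−1}(1/(2x))·C(x²))).) -/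
open Finset

attribute [local instance] Classical.propDecidable

/-- $P_{k,n}(q)\in\mathbb{Z}[q]$: the sum over all Dyck paths from (0,0) to (n,0)
of $q^{st_k(p)}$, where $st_k(p)$ is the number of k-down steps of p. -/
noncomputable def P (k n : ℕ) : Polynomial ℤ :=
  ∑ p ∈ gdPaths n 0, (Polynomial.X : Polynomial ℤ) ^ downSteps (k : ℤ) p

/-- The renormalized Chebyshev polynomials of the second kind, indexed so that
`pcheb 0 = p_{-1} = 0`, `pcheb 1 = p_0 = 1`, and `pcheb (k+2) = p_{k+1} = p_k − x²·p_{k−1}`. -/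
noncomputable def pcheb : ℕ → Polynomial ℤ
  | 0 => 0
  | 1 => 1
  | (k + 2) => pcheb (k + 1) - Polynomial.X ^ 2 * pcheb k

/-- Embedding of ℤ[x] into the ring of formal power series in x over ℤ[q]. -/
noncomputable def emb (p : Polynomial ℤ) : PowerSeries (Polynomial ℤ) :=
  ((p.map (Int.castRingHom (Polynomial ℤ)) : Polynomial (Polynomial ℤ)) :
    PowerSeries (Polynomial ℤ))

/-- 𝒞 = Σ_{m≥0} Catalan(m)·x^{2m}, the generating function of Dyck paths by length,
as a formal power series in x over ℤ[q]. -/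
noncomputable def catGF : PowerSeries (Polynomial ℤ) :=
  PowerSeries.mk fun m => if Even m then ((catalan (m / 2) : ℤ) : Polynomial ℤ) else 0

/-- $C_k(x,q) = Σ_{n≥0} P_{k,n}(q)·x^n$, a formal power series in x over ℤ[q]. -/
noncomputable def Ck (k : ℕ) : PowerSeries (Polynomial ℤ) :=
  PowerSeries.mk fun n => P k n

/-- The constant q, viewed inside the ring of formal power series in x over ℤ[q]. -/
noncomputable def qq : PowerSeries (Polynomial ℤ) :=
  PowerSeries.C Polynomial.X

namespace Dyck9

def sw (b : Bool) : ℤ := if b then 1 else -1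
@[simp] lemma sw_true : sw true = 1 := rfl
@[simp] lemma sw_false : sw false = -1 := rfl
def wt (l : List Bool) : ℤ := (l.map sw).sum
@[simp] lemma wt_nil : wt [] = 0 := rfl
@[simp] lemma wt_cons (b : Bool) (t : List Bool) : wt (b :: t) = sw b + wt t := by simp [wt]
@[simp] lemma wt_append (l1 l2 : List Bool) : wt (l1 ++ l2) = wt l1 + wt l2 := by simp [wt]
def IsDyck (l : List Bool) : Prop := wt l = 0 ∧ ∀ i, 0 ≤ wt (l.take i)
def ds : ℤ → ℤ → List Bool → ℕ
  | _, _, [] => 0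
  | h, k, (true :: t) => ds (h+1) k t
  | h, k, (false :: t) => (if h = k then 1 else 0) + ds (h-1) k t
@[simp] lemma ds_nil (h k : ℤ) : ds h k [] = 0 := rfl
@[simp] lemma ds_cons_true (h k : ℤ) (t) : ds h k (true :: t) = ds (h+1) k t := rfl
@[simp] lemma ds_cons_false (h k : ℤ) (t) :
    ds h k (false :: t) = (if h = k then 1 else 0) + ds (h-1) k t := rfl

-- transfer lemmas

@[simp] lemma pathHeight_zero {n : ℕ} (p : Fin n → Bool) : pathHeight p 0 = 0 := by
  simp [pathHeight]

lemma pathHeight_succ_fin {m : ℕ} (p : Fin (m+1) → Bool) (i : ℕ) :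
    pathHeight p (i+1) = sw (p 0) + pathHeight (fun j : Fin m => p j.succ) i := by
  unfold pathHeight
  rw [Finset.sum_filter, Finset.sum_filter, Fin.sum_univ_succ]
  simp only [Fin.val_zero, Fin.val_succ, sw]
  congr 1
  · simp

lemma pathHeight_ofFn {n : ℕ} (p : Fin n → Bool) : ∀ i, pathHeight p i = wt ((List.ofFn p).take i) := by
  induction n with
  | zero =>
    intro i
    simp [pathHeight, Finset.filter_eq_empty_iff]
  | succ m ih =>
    intro i
    cases i with
    | zero => simp
    | succ j =>
      rw [pathHeight_succ_fin, List.ofFn_succ, List.take_succ_cons, wt_cons, ih]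

lemma ds_ofFn {n : ℕ} (p : Fin n → Bool) : ∀ (h k : ℤ),
    ds h k (List.ofFn p) =
      (Finset.univ.filter fun i : Fin n => p i = false ∧ h + pathHeight p (i : ℕ) = k).card := by
  induction n with
  | zero => intro h k; simp
  | succ m ih =>
    intro h k
    rw [Finset.card_filter, Fin.sum_univ_succ, List.ofFn_succ]
    cases hp : p 0
    · rw [ds_cons_false, ih, Finset.card_filter]
      congr 1
      · simp
      · apply Finset.sum_congr rfl
        intro i _
        apply if_congr _ rfl rfl
        rw [Fin.val_succ, pathHeight_succ_fin, hp]
        simp only [sw_false]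
        constructor
        · rintro ⟨h1, h2⟩; exact ⟨h1, by linarith⟩
        · rintro ⟨h1, h2⟩; exact ⟨h1, by linarith⟩
    · rw [ds_cons_true, ih, Finset.card_filter]
      rw [show (if (true = false ∧ h + pathHeight p ((0 : Fin (m+1)) : ℕ) = k) then 1 else 0) = 0 by
        simp]
      rw [zero_add]
      apply Finset.sum_congr rfl
      intro i _
      apply if_congr _ rfl rfl
      rw [Fin.val_succ, pathHeight_succ_fin, hp]
      simp only [sw_true]
      constructor
      · rintro ⟨h1, h2⟩; exact ⟨h1, by linarith⟩
      · rintro ⟨h1, h2⟩; exact ⟨h1, by linarith⟩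

lemma downSteps_eq {n : ℕ} (k : ℤ) (p : Fin n → Bool) :
    downSteps k p = ds 0 k (List.ofFn p) := by
  rw [ds_ofFn]
  unfold downSteps
  congr 1
  apply Finset.filter_congr
  intro i _
  simp

lemma isGDPath_iff {n : ℕ} (p : Fin n → Bool) : IsGDPath 0 p ↔ IsDyck (List.ofFn p) := by
  constructor
  · rintro ⟨h1, h2⟩
    have hn : pathHeight p n = wt (List.ofFn p) := by
      rw [pathHeight_ofFn]
      rw [List.take_of_length_le (by simp)]
    constructor
    · rw [← hn, h1]
    · intro i
      rcases le_or_gt i n with hi | hi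
      · rw [← pathHeight_ofFn]; exact h2 i hi
      · rw [List.take_of_length_le (by simp; omega)]
        rw [← hn, h1]
  · rintro ⟨h1, h2⟩
    constructor
    · rw [pathHeight_ofFn, List.take_of_length_le (by simp), h1]
    · intro i _
      rw [pathHeight_ofFn]
      exact h2 i

noncomputable def dyckFinset (n : ℕ) : Finset (List Bool) := (gdPaths n 0).image List.ofFn

lemma mem_dyckFinset {n : ℕ} {l : List Bool} :
    l ∈ dyckFinset n ↔ l.length = n ∧ IsDyck l := by
  constructor
  · intro hl
    obtain ⟨p, hp, rfl⟩ := Finset.mem_image.mp hl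
    rw [gdPaths, Finset.mem_filter] at hp
    exact ⟨by simp, (isGDPath_iff p).mp hp.2⟩
  · rintro ⟨rfl, hd⟩
    apply Finset.mem_image.mpr
    refine ⟨fun i => l.get i, ?_, List.ofFn_get l⟩
    rw [gdPaths, Finset.mem_filter]
    exact ⟨Finset.mem_univ _, (isGDPath_iff _).mpr (by rw [List.ofFn_get]; exact hd)⟩

lemma P_eq_sum_dyck (k n : ℕ) :
    P k n = ∑ l ∈ dyckFinset n, (Polynomial.X : Polynomial ℤ) ^ (ds 0 (k : ℤ) l) := by
  rw [P, dyckFinset, Finset.sum_image (fun p _ q _ h => List.ofFn_injective h)]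
  apply Finset.sum_congr rfl
  intro p _
  rw [downSteps_eq]

lemma ds_append (l1 : List Bool) : ∀ (l2 : List Bool) (h k : ℤ),
    ds h k (l1 ++ l2) = ds h k l1 + ds (h + wt l1) k l2 := by
  induction l1 with
  | nil => intro l2 h k; simp
  | cons b t ih =>
    intro l2 h k
    cases b <;> simp [ih] <;> ring_nf

lemma ds_shift (l : List Bool) : ∀ (h k c : ℤ), ds (h + c) (k + c) l = ds h k l := by
  induction l with
  | nil => intro h k c; simp
  | cons b t ih =>
    intro h k c
    cases b <;> simp only [ds_cons_true, ds_cons_false]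
    · rw [show h + c - 1 = (h - 1) + c by ring, ih]
      simp only [add_left_inj]
    · rw [show h + c + 1 = (h + 1) + c by ring, ih]

lemma ds_eq_zero (l : List Bool) : ∀ (h k : ℤ), (∀ i, k ≤ h + wt (l.take i)) →
    ds h k l = 0 := by
  induction l with
  | nil => intro h k _; simp
  | cons b t ih =>
    intro h k hge
    cases b <;> simp
    · constructor
      · intro hhk
        have h1 := hge 1
        simp only [List.take_succ_cons, List.take_zero, wt_cons, wt_nil, sw_false] at h1
        linarith
      · apply ih
        intro i
        have := hge (i + 1)
        simp [List.take_succ_cons] at this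
        linarith
    · apply ih
      intro i
      have := hge (i + 1)
      simp [List.take_succ_cons] at this
      linarith

lemma ds_dyck_nonpos {l : List Bool} (hd : IsDyck l) {k : ℤ} (hk : k ≤ 0) : ds 0 k l = 0 :=
  ds_eq_zero l 0 k (fun i => by have := hd.2 i; linarith)

lemma glue_isDyck {l1 l2 : List Bool} (h1 : IsDyck l1) (h2 : IsDyck l2) :
    IsDyck (true :: (l1 ++ false :: l2)) := by
  constructor
  · simp [h1.1, h2.1]
  · intro i
    cases i with
    | zero => simp
    | succ j =>
      rw [List.take_succ_cons, wt_cons, sw_true, List.take_append, wt_append]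
      rcases le_or_gt j l1.length with hj | hj
      · have h0 : j - l1.length = 0 := by omega
        rw [h0]
        have := h1.2 j
        simp only [List.take_zero, wt_nil]
        linarith
      · rw [List.take_of_length_le (le_of_lt hj)]
        have hd : j - l1.length = (j - l1.length - 1) + 1 := by omega
        rw [hd, List.take_succ_cons, wt_cons, sw_false, h1.1]
        have := h2.2 (j - l1.length - 1)
        linarith

lemma dyck_append_inj_len {l1 l2 l1' l2' : List Bool} (h1 : IsDyck l1) (h1' : IsDyck l1')
    (heq : l1 ++ false :: l2 = l1' ++ false :: l2') (hlt : l1.length < l1'.length) : False := by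
  have htake : l1'.take (l1.length + 1) = l1 ++ [false] := by
    have h := congrArg (List.take (l1.length + 1)) heq
    rw [List.take_append, List.take_append] at h
    have e1 : l1.take (l1.length + 1) = l1 := List.take_of_length_le (by omega)
    have e2 : l1.length + 1 - l1.length = 1 := by omega
    have e3 : l1.length + 1 - l1'.length = 0 := by omega
    rw [e1, e2, e3] at h
    simp only [List.take_zero, List.append_nil] at h
    rw [← h]
    simp
  have hneg := h1'.2 (l1.length + 1)
  rw [htake, wt_append, h1.1] at hneg
  simp at hneg

lemma dyck_glue_inj {l1 l2 l1' l2' : List Bool} (h1 : IsDyck l1) (h1' : IsDyck l1')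
    (heq : l1 ++ false :: l2 = l1' ++ false :: l2') : l1 = l1' ∧ l2 = l2' := by
  have hlen : l1.length = l1'.length := by
    rcases lt_trichotomy l1.length l1'.length with h | h | h
    · exact absurd (dyck_append_inj_len h1 h1' heq h) not_false
    · exact h
    · exact absurd (dyck_append_inj_len h1' h1 heq.symm h) not_false
  obtain ⟨e1, e2⟩ := List.append_inj heq hlen
  exact ⟨e1, by injection e2⟩

lemma dyck_decompose {l : List Bool} (hd : IsDyck l) (hne : l ≠ []) :
    ∃ l1 l2, IsDyck l1 ∧ IsDyck l2 ∧ l = true :: (l1 ++ false :: l2) := by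
  obtain ⟨b, t, rfl⟩ := List.exists_cons_of_ne_nil hne
  have hb : b = true := by
    by_contra hb
    have hb' : b = false := by
      cases b
      · rfl
      · exact absurd rfl hb
    subst hb'
    have h2 := hd.2 1
    simp only [List.take_succ_cons, List.take_zero, wt_cons, wt_nil, sw_false] at h2
    linarith
  subst hb
  have hwt : wt t = -1 := by
    have := hd.1
    simp only [wt_cons, sw_true] at this
    linarith
  have hQ : ∃ m, wt (t.take m) = -1 := ⟨t.length, by rw [List.take_length]; exact hwt⟩
  set m := Nat.find hQ with hmdef
  have hQm : wt (t.take m) = -1 := Nat.find_spec hQ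
  have hlt : ∀ j < m, wt (t.take j) ≠ -1 := fun j hj => Nat.find_min hQ hj
  have hprefl : ∀ j, -1 ≤ wt (t.take j) := by
    intro j
    have h2 := hd.2 (j + 1)
    simp only [List.take_succ_cons, wt_cons, sw_true] at h2
    linarith
  have hge : ∀ j < m, 0 ≤ wt (t.take j) := by
    intro j hj
    have := hlt j hj
    have := hprefl j
    omega
  have hm1 : 0 < m := by
    rcases Nat.eq_zero_or_pos m with h | h
    · rw [h] at hQm; simp at hQm
    · exact h
  have hmlen : m ≤ t.length := Nat.find_le (by rw [List.take_length]; exact hwt)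
  have hm1len : m - 1 < t.length := by omega
  have htakem : t.take m = t.take (m-1) ++ [t[m-1]] := by
    rw [List.take_concat_get']
    congr 1
    omega
  have hwt1 : wt (t.take m) = wt (t.take (m-1)) + sw (t[m-1]) := by
    rw [htakem, wt_append]
    simp [wt]
  have hprev : 0 ≤ wt (t.take (m-1)) := hge (m-1) (by omega)
  have hgetfalse : t[m-1] = false ∧ wt (t.take (m-1)) = 0 := by
    rcases Bool.eq_false_or_eq_true (t[m-1]'hm1len) with h | h
    · rw [h, sw_true] at hwt1
      omega
    · rw [h, sw_false] at hwt1
      exact ⟨h, by omega⟩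
  refine ⟨t.take (m-1), t.drop m, ⟨hgetfalse.2, ?_⟩, ⟨?_, ?_⟩, ?_⟩
  · intro i
    rw [List.take_take]
    rcases le_or_gt m (min i (m-1) + 1) with h | h
    · have : min i (m-1) = m - 1 := by omega
      rw [this]
      exact hprev
    · exact hge _ (by omega)
  · -- wt (t.drop m) = 0
    have h := congrArg wt (List.take_append_drop m t)
    rw [wt_append] at h
    rw [hQm] at h
    omega
  · -- prefixes of drop
    intro i
    have h := congrArg wt (List.take_add (l := t) (i := m) (j := i))
    rw [wt_append, hQm] at h
    have := hprefl (m + i)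
    omega
  · -- reassembly
    congr 1
    conv_lhs => rw [← List.take_append_drop m t]
    rw [htakem, hgetfalse.1]
    simp

lemma sum_dyck_decomp {M : Type*} [CommSemiring M] (n : ℕ) (hn : 2 ≤ n)
    (F G H : List Bool → M)
    (hw : ∀ l1 l2, IsDyck l1 → IsDyck l2 → F (true :: (l1 ++ false :: l2)) = G l1 * H l2) :
    ∑ l ∈ dyckFinset n, F l =
      ∑ ab ∈ Finset.HasAntidiagonal.antidiagonal (n-2),
        (∑ l1 ∈ dyckFinset ab.1, G l1) * (∑ l2 ∈ dyckFinset ab.2, H l2) := by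
  have hstep : ∀ ab : ℕ × ℕ, (∑ l1 ∈ dyckFinset ab.1, G l1) * (∑ l2 ∈ dyckFinset ab.2, H l2)
      = ∑ l12 ∈ dyckFinset ab.1 ×ˢ dyckFinset ab.2, G l12.1 * H l12.2 := by
    intro ab
    rw [Finset.sum_mul_sum]
    rw [Finset.sum_product]
  simp_rw [hstep]
  rw [← Finset.sum_sigma (Finset.HasAntidiagonal.antidiagonal (n-2))
    (fun ab => dyckFinset ab.1 ×ˢ dyckFinset ab.2)
    (fun x => G x.2.1 * H x.2.2)]
  symm
  apply Finset.sum_bij (i := fun (x : (_ : ℕ × ℕ) × (List Bool × List Bool)) _ =>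
    true :: (x.2.1 ++ false :: x.2.2))
  · -- maps to
    rintro ⟨⟨a, b⟩, ⟨l1, l2⟩⟩ hx
    rw [Finset.mem_sigma, Finset.mem_product] at hx
    have hab := Finset.HasAntidiagonal.mem_antidiagonal.mp hx.1
    have hl1 := mem_dyckFinset.mp hx.2.1
    have hl2 := mem_dyckFinset.mp hx.2.2
    rw [mem_dyckFinset]
    refine ⟨?_, glue_isDyck hl1.2 hl2.2⟩
    simp only [List.length_cons, List.length_append]
    have e1 := hl1.1
    have e2 := hl2.1
    simp only [e1, e2] at *
    omega
  · -- injective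
    rintro ⟨⟨a, b⟩, ⟨l1, l2⟩⟩ hx ⟨⟨a', b'⟩, ⟨l1', l2'⟩⟩ hy heq
    rw [Finset.mem_sigma, Finset.mem_product, mem_dyckFinset, mem_dyckFinset] at hx hy
    dsimp only at hx hy heq
    simp only [List.cons.injEq, true_and] at heq
    obtain ⟨e1, e2⟩ := dyck_glue_inj hx.2.1.2 hy.2.1.2 heq
    have ha : a = a' := by rw [← hx.2.1.1, ← hy.2.1.1, e1]
    have hb : b = b' := by rw [← hx.2.2.1, ← hy.2.2.1, e2]
    subst e1; subst e2; subst ha; subst hb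
    rfl
  · -- surjective
    intro l hl
    rw [mem_dyckFinset] at hl
    have hne : l ≠ [] := by
      intro h
      rw [h] at hl
      simp at hl
      omega
    obtain ⟨l1, l2, hd1, hd2, rfl⟩ := dyck_decompose hl.2 hne
    refine ⟨⟨⟨l1.length, l2.length⟩, ⟨l1, l2⟩⟩, ?_, rfl⟩
    rw [Finset.mem_sigma, Finset.mem_product, Finset.HasAntidiagonal.mem_antidiagonal]
    have hlen := hl.1
    simp only [List.length_cons, List.length_append] at hlen
    refine ⟨?_, mem_dyckFinset.mpr ⟨rfl, hd1⟩, mem_dyckFinset.mpr ⟨rfl, hd2⟩⟩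
    dsimp only
    omega
  · -- weights
    rintro ⟨⟨a, b⟩, ⟨l1, l2⟩⟩ hx
    rw [Finset.mem_sigma, Finset.mem_product, mem_dyckFinset, mem_dyckFinset] at hx
    exact (hw l1 l2 hx.2.1.2 hx.2.2.2).symm

lemma dyckFinset_zero : dyckFinset 0 = {[]} := by
  ext l
  simp only [mem_dyckFinset, Finset.mem_singleton, List.length_eq_zero_iff]
  constructor
  · exact fun h => h.1
  · rintro rfl
    exact ⟨rfl, rfl, by intro i; simp⟩

lemma even_wt_add_length (l : List Bool) : Even (wt l + l.length) := by
  induction l with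
  | nil => simp
  | cons b t ih =>
    simp only [wt_cons, List.length_cons]
    have h2 : Even (sw b + 1) := by cases b <;> simp [sw]
    have h3 := ih.add h2
    rw [show sw b + wt t + ((t.length + 1 : ℕ) : ℤ) = wt t + ↑t.length + (sw b + 1) by
      push_cast; ring]
    exact h3

lemma dyckFinset_odd {n : ℕ} (h : ¬ Even n) : dyckFinset n = ∅ := by
  ext l
  simp only [Finset.notMem_empty, iff_false, mem_dyckFinset, not_and]
  rintro rfl hd
  apply h
  have := even_wt_add_length l
  rw [hd.1, zero_add] at this
  exact_mod_cast this

lemma card_rec (n : ℕ) (hn : 2 ≤ n) : (dyckFinset n).card =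
    ∑ ab ∈ Finset.HasAntidiagonal.antidiagonal (n-2), (dyckFinset ab.1).card * (dyckFinset ab.2).card := by
  have h := sum_dyck_decomp (M := ℕ) n hn (fun _ => 1) (fun _ => 1) (fun _ => 1)
    (fun _ _ _ _ => (one_mul 1).symm)
  simpa using h

lemma sum_antidiagonal_even (m : ℕ) (f g : ℕ → ℕ) :
    ∑ ab ∈ Finset.HasAntidiagonal.antidiagonal (2*m),
      (if Even ab.1 then f (ab.1/2) else 0) * (if Even ab.2 then g (ab.2/2) else 0)
      = ∑ ij ∈ Finset.HasAntidiagonal.antidiagonal m, f ij.1 * g ij.2 := by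
  have himg : (Finset.HasAntidiagonal.antidiagonal m).image (fun ij : ℕ×ℕ => (2*ij.1, 2*ij.2))
      ⊆ Finset.HasAntidiagonal.antidiagonal (2*m) := by
    intro x hx
    simp only [Finset.mem_image, Finset.HasAntidiagonal.mem_antidiagonal] at hx ⊢
    obtain ⟨ij, hij, rfl⟩ := hx
    omega
  rw [← Finset.sum_subset himg ?zero]
  case zero =>
    intro x hx hnx
    simp only [Finset.HasAntidiagonal.mem_antidiagonal] at hx
    rcases Nat.even_or_odd x.1 with he | ho
    · exfalso
      apply hnx
      have he2 : Even x.2 := by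
        rcases he with ⟨c, hc⟩
        exact ⟨m - c, by omega⟩
      simp only [Finset.mem_image, Finset.HasAntidiagonal.mem_antidiagonal]
      rcases he with ⟨c, hc⟩
      rcases he2 with ⟨d, hd⟩
      refine ⟨(c, d), by omega, ?_⟩
      rw [Prod.ext_iff]
      constructor <;> simp <;> omega
    · have hne : ¬ Even x.1 := by
        simp [Nat.even_iff, Nat.odd_iff.mp ho]
      rw [if_neg hne, zero_mul]
  · rw [Finset.sum_image (by
      intro a _ b _ h
      rw [Prod.ext_iff] at h ⊢
      simp only at h
      constructor <;> omega)]
    apply Finset.sum_congr rfl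
    intro ij _
    have e1 : 2 * ij.1 / 2 = ij.1 := by omega
    have e2 : 2 * ij.2 / 2 = ij.2 := by omega
    rw [if_pos ⟨ij.1, by ring⟩, if_pos ⟨ij.2, by ring⟩, e1, e2]

lemma card_dyckFinset : ∀ n : ℕ, (dyckFinset n).card = if Even n then catalan (n/2) else 0 := by
  intro n
  induction n using Nat.strong_induction_on with
  | _ n ih =>
    rcases Nat.even_or_odd n with he | ho
    · rcases he with ⟨m, rfl⟩
      cases m with
      | zero => simp [dyckFinset_zero]
      | succ m' =>
        have h2 : 2 ≤ m' + 1 + (m' + 1) := by omega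
        rw [card_rec _ h2]
        have hsub : m' + 1 + (m' + 1) - 2 = 2 * m' := by omega
        rw [hsub]
        have hcong : ∀ ab ∈ Finset.HasAntidiagonal.antidiagonal (2 * m'),
            (dyckFinset ab.1).card * (dyckFinset ab.2).card =
            (if Even ab.1 then catalan (ab.1/2) else 0) *
              (if Even ab.2 then catalan (ab.2/2) else 0) := by
          intro ab hab
          rw [Finset.HasAntidiagonal.mem_antidiagonal] at hab
          rw [ih ab.1 (by omega), ih ab.2 (by omega)]
        rw [Finset.sum_congr rfl hcong, sum_antidiagonal_even, ← catalan_succ']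
        rw [if_pos ⟨m'+1, rfl⟩]
        congr 1
        omega
    · rw [Finset.card_eq_zero.mpr (dyckFinset_odd (by simp [Nat.even_iff, Nat.odd_iff.mp ho]))]
      rw [if_neg (by simp [Nat.even_iff, Nat.odd_iff.mp ho])]

lemma ds_glue (k : ℤ) {l1 : List Bool} (l2 : List Bool) (h1 : wt l1 = 0) :
    ds 0 k (true :: (l1 ++ false :: l2)) =
      ds 0 (k-1) l1 + (if k = 1 then 1 else 0) + ds 0 k l2 := by
  rw [ds_cons_true, zero_add, ds_append, h1, add_zero, ds_cons_false]
  have hshift : ds 1 k l1 = ds 0 (k-1) l1 := by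
    have := ds_shift l1 0 (k-1) 1
    simpa using this
  rw [hshift]
  have : (if (1 : ℤ) = k then 1 else 0) = (if k = 1 then 1 else 0) := by
    simp [eq_comm]
  rw [this]
  have : (1 : ℤ) - 1 = 0 := by ring
  rw [this]
  ring

lemma P_zero (k : ℕ) : P k 0 = 1 := by
  rw [P_eq_sum_dyck, dyckFinset_zero]
  simp

lemma P_one' (k : ℕ) : P k 1 = 0 := by
  rw [P_eq_sum_dyck, dyckFinset_odd (by simp)]
  simp

lemma P_one_rec (m : ℕ) :
    P 1 (m+2) = ∑ ab ∈ Finset.HasAntidiagonal.antidiagonal m,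
      (((dyckFinset ab.1).card : Polynomial ℤ) * Polynomial.X) * P 1 ab.2 := by
  rw [P_eq_sum_dyck]
  have hd := sum_dyck_decomp (m+2) (by omega)
    (fun l => (Polynomial.X : Polynomial ℤ) ^ (ds 0 ((1:ℕ):ℤ) l))
    (fun _ => (Polynomial.X : Polynomial ℤ))
    (fun l => (Polynomial.X : Polynomial ℤ) ^ (ds 0 ((1:ℕ):ℤ) l))
    ?hw
  case hw =>
    intro l1 l2 hd1 hd2
    rw [ds_glue _ _ hd1.1]
    rw [ds_dyck_nonpos hd1 (by norm_num)]
    norm_num [pow_add]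
  rw [hd]
  have hsub : m + 2 - 2 = m := by omega
  rw [hsub]
  apply Finset.sum_congr rfl
  intro ab _
  congr 1
  · rw [Finset.sum_const, nsmul_eq_mul]
  · rw [P_eq_sum_dyck]

lemma P_ge2_rec (k m : ℕ) :
    P (k+2) (m+2) = ∑ ab ∈ Finset.HasAntidiagonal.antidiagonal m, P (k+1) ab.1 * P (k+2) ab.2 := by
  rw [P_eq_sum_dyck]
  have hd := sum_dyck_decomp (m+2) (by omega)
    (fun l => (Polynomial.X : Polynomial ℤ) ^ (ds 0 ((k+2:ℕ):ℤ) l))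
    (fun l => (Polynomial.X : Polynomial ℤ) ^ (ds 0 ((k+1:ℕ):ℤ) l))
    (fun l => (Polynomial.X : Polynomial ℤ) ^ (ds 0 ((k+2:ℕ):ℤ) l))
    ?hw
  case hw =>
    intro l1 l2 hd1 hd2
    rw [ds_glue _ _ hd1.1]
    have e1 : ((k+2:ℕ):ℤ) - 1 = ((k+1:ℕ):ℤ) := by push_cast; ring
    have e2 : ((k+2:ℕ):ℤ) ≠ 1 := by push_cast; omega
    rw [e1, if_neg e2]
    rw [pow_add, pow_add]
    ring
  rw [hd]
  have hsub : m + 2 - 2 = m := by omega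
  rw [hsub]
  apply Finset.sum_congr rfl
  intro ab _
  rw [P_eq_sum_dyck, P_eq_sum_dyck]

lemma coeff_Ck (k n : ℕ) : PowerSeries.coeff n (Ck k) = P k n :=
  PowerSeries.coeff_mk _ _

lemma coeff_qq_X2_mul (f : PowerSeries (Polynomial ℤ)) (n : ℕ) :
    PowerSeries.coeff n (qq * PowerSeries.X^2 * f) =
      if 2 ≤ n then Polynomial.X * PowerSeries.coeff (n-2) f else 0 := by
  rw [show qq * PowerSeries.X^2 * f = qq * f * PowerSeries.X^2 by ring]
  rw [PowerSeries.coeff_mul_X_pow']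
  split_ifs with h
  · rw [qq, PowerSeries.coeff_C_mul]
  · rfl

lemma coeff_X2_mul (f : PowerSeries (Polynomial ℤ)) (n : ℕ) :
    PowerSeries.coeff n (PowerSeries.X^2 * f) =
      if 2 ≤ n then PowerSeries.coeff (n-2) f else 0 := by
  rw [mul_comm, PowerSeries.coeff_mul_X_pow']

lemma coeff_catGF (n : ℕ) : PowerSeries.coeff n catGF =
    ((dyckFinset n).card : Polynomial ℤ) := by
  rw [catGF, PowerSeries.coeff_mk, card_dyckFinset n]
  split_ifs with h <;> simp

lemma feq1 : Ck 1 = 1 + qq * PowerSeries.X ^ 2 * catGF * Ck 1 := by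
  apply PowerSeries.ext
  intro n
  rw [show qq * PowerSeries.X ^ 2 * catGF * Ck 1
    = qq * PowerSeries.X^2 * (catGF * Ck 1) by ring]
  rw [map_add, coeff_qq_X2_mul, coeff_Ck, PowerSeries.coeff_one]
  match n with
  | 0 => rw [P_zero]; norm_num
  | 1 => rw [P_one']; norm_num
  | (m+2) =>
    rw [if_neg (by omega), if_pos (by omega), zero_add]
    rw [show m + 2 - 2 = m from rfl, PowerSeries.coeff_mul, P_one_rec, Finset.mul_sum]
    apply Finset.sum_congr rfl
    intro ab _
    rw [coeff_catGF, coeff_Ck]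
    ring

lemma feqk (k : ℕ) : Ck (k+2) = 1 + PowerSeries.X ^ 2 * Ck (k+1) * Ck (k+2) := by
  apply PowerSeries.ext
  intro n
  rw [show PowerSeries.X^2 * Ck (k+1) * Ck (k+2)
    = PowerSeries.X^2 * (Ck (k+1) * Ck (k+2)) by ring]
  rw [map_add, coeff_X2_mul, coeff_Ck, PowerSeries.coeff_one]
  match n with
  | 0 => rw [P_zero]; norm_num
  | 1 => rw [P_one']; norm_num
  | (m+2) =>
    rw [if_neg (by omega), if_pos (by omega), zero_add]
    rw [show m + 2 - 2 = m from rfl, PowerSeries.coeff_mul, P_ge2_rec]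
    apply Finset.sum_congr rfl
    intro ab _
    rw [coeff_Ck, coeff_Ck]

lemma emb_eq (p : Polynomial ℤ) : emb p =
    (Polynomial.coeToPowerSeries.ringHom.comp
      (Polynomial.mapRingHom (Int.castRingHom (Polynomial ℤ)))) p := rfl

lemma emb_one : emb 1 = 1 := by rw [emb_eq]; simp

lemma emb_zero : emb 0 = 0 := by rw [emb_eq]; simp

lemma emb_sub (a b : Polynomial ℤ) : emb (a - b) = emb a - emb b := by
  rw [emb_eq, emb_eq, emb_eq, map_sub]

lemma emb_X2_mul (p : Polynomial ℤ) :
    emb (Polynomial.X^2 * p) = PowerSeries.X^2 * emb p := by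
  rw [emb_eq, emb_eq, map_mul, map_pow]
  congr 2
  simp [Polynomial.coeToPowerSeries.ringHom_apply, Polynomial.coe_X]

theorem stmt9' (k : ℕ) (hk : 1 ≤ k) :
    (emb (pcheb (k + 1)) - qq * PowerSeries.X ^ 2 * emb (pcheb k) * catGF) * Ck k =
      emb (pcheb k) - qq * PowerSeries.X ^ 2 * emb (pcheb (k - 1)) * catGF := by
  induction k, hk using Nat.le_induction with
  | base =>
    rw [show (1:ℕ) - 1 = 0 from rfl]
    rw [show pcheb 2 = pcheb 1 - Polynomial.X^2 * pcheb 0 from rfl]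
    rw [show pcheb 1 = 1 from rfl, show pcheb 0 = 0 from rfl]
    rw [emb_sub, emb_X2_mul, emb_one, emb_zero]
    have h := feq1
    linear_combination h
  | succ k hk ih =>
    obtain ⟨j, rfl⟩ : ∃ j, k = j + 1 := ⟨k - 1, by omega⟩
    rw [show j+1+1+1 = j+3 by omega, show j+1+1 = j+2 by omega,
      show j+1+1-1 = j+1 by omega] at *
    rw [show j+1-1 = j by omega] at ih
    have hfeq := feqk j
    have hp2 : emb (pcheb (j+3)) = emb (pcheb (j+2)) - PowerSeries.X^2 * emb (pcheb (j+1)) := by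
      rw [show pcheb (j+3) = pcheb (j+2) - Polynomial.X^2 * pcheb (j+1) from rfl]
      rw [emb_sub, emb_X2_mul]
    have hp1 : emb (pcheb (j+2)) = emb (pcheb (j+1)) - PowerSeries.X^2 * emb (pcheb j) := by
      rw [show pcheb (j+2) = pcheb (j+1) - Polynomial.X^2 * pcheb j from rfl]
      rw [emb_sub, emb_X2_mul]
    rw [hp2]
    linear_combination (PowerSeries.X^2 * Ck (j+2)) * ih
      + (emb (pcheb (j+2)) - qq * PowerSeries.X^2 * emb (pcheb (j+1)) * catGF) * hfeq
      - qq * PowerSeries.X^2 * catGF * Ck (j+2) * hp1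

end Dyck9

/-- For k ≥ 1, (p_k − q·x²·p_{k−1}·𝒞)·C_k(x,q) = p_{k−1} − q·x²·p_{k−2}·𝒞 holds in the
ring of formal power series in x over ℤ[q] (with p_{-1} = 0, handled by `pcheb`'s
index shift). -/
theorem stmt9 (k : ℕ) (hk : 1 ≤ k) :
    (emb (pcheb (k + 1)) - qq * PowerSeries.X ^ 2 * emb (pcheb k) * catGF) * Ck k =
      emb (pcheb k) - qq * PowerSeries.X ^ 2 * emb (pcheb (k - 1)) * catGF :=
  Dyck9.stmt9' k hk
end
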